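/- If x, y, z are distinct pairwise relatively prime positive integers, then for every n ≥ 4 the matrix M_n(x,y,z) is product-irregular, i.e., the products of the nonzero entries of distinct rows are distinct. -/

import Mathlib

open Finset

/-- The matrix `M_n(x,y,z)` (1-based indices translated to `Fin n`): zero diagonal,
`x` when `j ≤ n - i + 1` (and `i ≠ j`), `z` at positions `(k,n)` and `(n,k)` where
`k = ⌈n/2⌉ + 1`, and `y` otherwise. -/
def Mmat (n x y z : ℕ) : Matrix (Fin n) (Fin n) ℕ := fun i j =>
  if i = j then 0
  else if (j : ℕ) + 1 ≤ n - (i : ℕ) then x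
  else if (((i : ℕ) + 1 = (n + 1) / 2 + 1 ∧ (j : ℕ) + 1 = n) ∨
           ((i : ℕ) + 1 = n ∧ (j : ℕ) + 1 = (n + 1) / 2 + 1)) then z
  else y

/-- Product of the nonzero entries of row `i`. -/
def rowProd {ι : Type*} [Fintype ι] [DecidableEq ι] (M : Matrix ι ι ℕ) (i : ι) : ℕ :=
  ∏ j ∈ Finset.univ.filter (fun j => M i j ≠ 0), M i j

/-- A square matrix is product-irregular if distinct rows have distinct products of
nonzero entries. -/
def MatPI {ι : Type*} [Fintype ι] [DecidableEq ι] (M : Matrix ι ι ℕ) : Prop :=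
  Function.Injective (rowProd M)

/- ### Auxiliary machinery -/

def expA (n ii : ℕ) : ℕ := if 2 * ii < n then n - 1 - ii else n - ii
def expC (n ii : ℕ) : ℕ := if ii = (n + 1) / 2 ∨ ii = n - 1 then 1 else 0
def expB (n ii : ℕ) : ℕ := n - 1 - expA n ii - expC n ii

def rowFun (n x y z ii j : ℕ) : ℕ :=
  if j = ii then 1
  else if j + 1 ≤ n - ii then x
  else if ((ii + 1 = (n + 1) / 2 + 1 ∧ j + 1 = n) ∨
           (ii + 1 = n ∧ j + 1 = (n + 1) / 2 + 1)) then z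
  else y

lemma prod_split (n m : ℕ) (hm : m ≤ n) (f : ℕ → ℕ) :
    ∏ j ∈ range n, f j = (∏ j ∈ range m, f j) * ∏ j ∈ Ico m n, f j := by
  rw [range_eq_Ico, range_eq_Ico]
  exact (Finset.prod_Ico_consecutive f (Nat.zero_le m) hm).symm

lemma prod_peel {s : Finset ℕ} {a : ℕ} (u : ℕ) (g : ℕ → ℕ) (ha : a ∈ s) :
    ∏ j ∈ s, (if j = a then u else g j) = u * ∏ j ∈ s.erase a, g j := by
  rw [← Finset.mul_prod_erase s _ ha, if_pos rfl]
  congr 1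
  exact Finset.prod_congr rfl fun j hj => if_neg (Finset.ne_of_mem_erase hj)

lemma exp_eq {x y z a b c a' b' c' : ℕ} (hx : 2 ≤ x) (hy : 0 < y) (hz : 0 < z)
    (cxy : Nat.Coprime x y) (cxz : Nat.Coprime x z)
    (h : x ^ a * y ^ b * z ^ c = x ^ a' * y ^ b' * z ^ c') : a = a' := by
  obtain ⟨p, pp, pd⟩ := Nat.exists_prime_and_dvd (by omega : x ≠ 1)
  have hx0 : x ≠ 0 := by omega
  have hy0 : y ≠ 0 := hy.ne'
  have hz0 : z ≠ 0 := hz.ne'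
  have hpx : 0 < x.factorization p := pp.factorization_pos_of_dvd hx0 pd
  have hpy : y.factorization p = 0 := by
    refine Nat.factorization_eq_zero_of_not_dvd fun hd => pp.ne_one ?_
    exact Nat.dvd_one.mp (cxy ▸ Nat.dvd_gcd pd hd)
  have hpz : z.factorization p = 0 := by
    refine Nat.factorization_eq_zero_of_not_dvd fun hd => pp.ne_one ?_
    exact Nat.dvd_one.mp (cxz ▸ Nat.dvd_gcd pd hd)
  have key : ∀ e f g : ℕ, (x ^ e * y ^ f * z ^ g).factorization p = e * x.factorization p := by
    intro e f g
    rw [Nat.factorization_mul (mul_ne_zero (pow_ne_zero _ hx0) (pow_ne_zero _ hy0))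
        (pow_ne_zero _ hz0),
      Nat.factorization_mul (pow_ne_zero _ hx0) (pow_ne_zero _ hy0),
      Nat.factorization_pow, Nat.factorization_pow, Nat.factorization_pow]
    simp [hpy, hpz]
  have := congrArg (fun m => m.factorization p) h
  simp only [key] at this
  exact Nat.eq_of_mul_eq_mul_right hpx this

lemma triple_inj {x y z : ℕ} (hx : 0 < x) (hy : 0 < y) (hz : 0 < z)
    (hxy : x ≠ y) (hyz : y ≠ z) (hxz : x ≠ z)
    (cxy : Nat.Coprime x y) (cyz : Nat.Coprime y z) (cxz : Nat.Coprime x z)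
    {a b c a' b' c' : ℕ} (hs : a + b + c = a' + b' + c')
    (h : x ^ a * y ^ b * z ^ c = x ^ a' * y ^ b' * z ^ c') :
    a = a' ∧ b = b' ∧ c = c' := by
  have hy' : y ^ b * x ^ a * z ^ c = y ^ b' * x ^ a' * z ^ c' := by
    rw [show y ^ b * x ^ a * z ^ c = x ^ a * y ^ b * z ^ c from by ring,
      show y ^ b' * x ^ a' * z ^ c' = x ^ a' * y ^ b' * z ^ c' from by ring]
    exact h
  have hz' : z ^ c * x ^ a * y ^ b = z ^ c' * x ^ a' * y ^ b' := by
    rw [show z ^ c * x ^ a * y ^ b = x ^ a * y ^ b * z ^ c from by ring,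
      show z ^ c' * x ^ a' * y ^ b' = x ^ a' * y ^ b' * z ^ c' from by ring]
    exact h
  by_cases h1 : x = 1
  · have hy2 : 2 ≤ y := by omega
    have hz2 : 2 ≤ z := by omega
    have hb : b = b' := exp_eq hy2 hx hz cxy.symm cyz hy'
    have hc : c = c' := exp_eq hz2 hx hy cxz.symm cyz.symm hz'
    exact ⟨by omega, hb, hc⟩
  · by_cases h2 : y = 1
    · have hx2 : 2 ≤ x := by omega
      have hz2 : 2 ≤ z := by omega
      have ha : a = a' := exp_eq hx2 hy hz cxy cxz h
      have hc : c = c' := exp_eq hz2 hx hy cxz.symm cyz.symm hz'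
      exact ⟨ha, by omega, hc⟩
    · have hx2 : 2 ≤ x := by omega
      have hy2 : 2 ≤ y := by omega
      have ha : a = a' := exp_eq hx2 hy hz cxy cxz h
      have hb : b = b' := exp_eq hy2 hx hz cxy.symm cyz hy'
      exact ⟨ha, hb, by omega⟩

lemma exp_sum (n ii : ℕ) (hn : 4 ≤ n) (hii : ii < n) :
    expA n ii + expB n ii + expC n ii = n - 1 := by
  simp only [expA, expB, expC]
  split_ifs <;> omega

lemma exp_inj (n : ℕ) (hn : 4 ≤ n) {a b : ℕ} (ha : a < n) (hb : b < n)
    (h1 : expA n a = expA n b) (h3 : expC n a = expC n b) : a = b := by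
  simp only [expA, expC] at h1 h3
  split_ifs at h1 h3 <;> omega

lemma row_formula (n x y z : ℕ) (hn : 4 ≤ n) (hx : 0 < x) (hy : 0 < y) (hz : 0 < z)
    (i : Fin n) :
    rowProd (Mmat n x y z) i =
      x ^ expA n (i : ℕ) * y ^ expB n (i : ℕ) * z ^ expC n (i : ℕ) := by
  have hii : (i : ℕ) < n := i.isLt
  have step1 : rowProd (Mmat n x y z) i = ∏ j ∈ range n, rowFun n x y z (i : ℕ) j := by
    rw [rowProd, Finset.prod_filter, ← Fin.prod_univ_eq_prod_range]
    refine Finset.prod_congr rfl fun j _ => ?_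
    simp only [Mmat, rowFun]
    rcases eq_or_ne i j with rfl | hij
    · simp
    · have hcj : ¬((j : ℕ) = (i : ℕ)) := fun hc => hij (Fin.val_injective hc.symm)
      simp only [if_neg hij, if_neg hcj]
      exact if_pos (show _ ≠ 0 by split_ifs <;> omega)
  rw [step1]
  set ii := (i : ℕ) with hiidef
  set k := (n + 1) / 2 with hk
  have hk2 : 2 ≤ k := by omega
  have hkn : k ≤ n - 2 := by omega
  have hk2n : n ≤ 2 * k := by omega
  by_cases hik : ii = k
  · -- row k : x^(n-k) y^(k-2) z
    rw [prod_split n (n - k) (by omega)]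
    have eA : ∀ j ∈ range (n - k), rowFun n x y z ii j = x := by
      intro j hj
      rw [mem_range] at hj
      unfold rowFun
      split_ifs <;> omega
    have eB : ∀ j ∈ Ico (n - k) n, rowFun n x y z ii j =
        if j = ii then 1 else if j = n - 1 then z else y := by
      intro j hj
      rw [mem_Ico] at hj
      unfold rowFun
      split_ifs <;> omega
    rw [Finset.prod_congr rfl eA, Finset.prod_const, card_range,
      Finset.prod_congr rfl eB,
      prod_peel 1 _ (by rw [mem_Ico]; omega),
      prod_peel z (fun _ => y) (by rw [mem_erase, mem_Ico]; omega),
      Finset.prod_const, card_erase_of_mem (by rw [mem_erase, mem_Ico]; omega),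
      card_erase_of_mem (by rw [mem_Ico]; omega), Nat.card_Ico]
    have e1 : expA n ii = n - k := by unfold expA; rw [if_neg (by omega)]; omega
    have e2 : expC n ii = 1 := by unfold expC; rw [if_pos (by omega)]
    have e3 : expB n ii = k - 2 := by unfold expB; rw [e1, e2]; omega
    rw [e1, e2, e3]
    have : n - (n - k) - 1 - 1 = k - 2 := by omega
    rw [this, pow_one]
    ring
  · by_cases hilast : ii = n - 1
    · -- last row : x y^(n-3) z
      rw [prod_split n 1 (by omega)]
      have eA : ∀ j ∈ range 1, rowFun n x y z ii j = x := by
        intro j hj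
        rw [mem_range] at hj
        unfold rowFun
        split_ifs <;> omega
      have eB : ∀ j ∈ Ico 1 n, rowFun n x y z ii j =
          if j = ii then 1 else if j = k then z else y := by
        intro j hj
        rw [mem_Ico] at hj
        unfold rowFun
        split_ifs <;> omega
      rw [Finset.prod_congr rfl eA, Finset.prod_const, card_range,
        Finset.prod_congr rfl eB,
        prod_peel 1 _ (by rw [mem_Ico]; omega),
        prod_peel z (fun _ => y) (by rw [mem_erase, mem_Ico]; omega),
        Finset.prod_const, card_erase_of_mem (by rw [mem_erase, mem_Ico]; omega),
        card_erase_of_mem (by rw [mem_Ico]; omega), Nat.card_Ico]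
      have e1 : expA n ii = 1 := by unfold expA; rw [if_neg (by omega)]; omega
      have e2 : expC n ii = 1 := by unfold expC; rw [if_pos (by omega)]
      have e3 : expB n ii = n - 3 := by unfold expB; rw [e1, e2]; omega
      rw [e1, e2, e3]
      have : n - 1 - 1 - 1 = n - 3 := by omega
      rw [this, pow_one, pow_one]
      ring
    · by_cases hsm : 2 * ii < n
      · -- upper rows : x^(n-1-ii) y^ii
        rw [prod_split n (n - ii) (by omega)]
        have eA : ∀ j ∈ range (n - ii), rowFun n x y z ii j =
            if j = ii then 1 else x := by
          intro j hj
          rw [mem_range] at hj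
          unfold rowFun
          split_ifs <;> omega
        have eB : ∀ j ∈ Ico (n - ii) n, rowFun n x y z ii j = y := by
          intro j hj
          rw [mem_Ico] at hj
          unfold rowFun
          split_ifs <;> omega
        rw [Finset.prod_congr rfl eA,
          prod_peel 1 (fun _ => x) (by rw [mem_range]; omega),
          Finset.prod_const, card_erase_of_mem (by rw [mem_range]; omega), card_range,
          Finset.prod_congr rfl eB, Finset.prod_const, Nat.card_Ico]
        have e1 : expA n ii = n - ii - 1 := by unfold expA; rw [if_pos hsm]; omega
        have e2 : expC n ii = 0 := by unfold expC; rw [if_neg (by omega)]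
        have e3 : expB n ii = ii := by
          unfold expB; rw [e2]; unfold expA; rw [if_pos hsm]; omega
        rw [e1, e2, e3, pow_zero]
        have : n - (n - ii) = ii := by omega
        rw [this]
        ring
      · -- lower rows : x^(n-ii) y^(ii-1)
        rw [prod_split n (n - ii) (by omega)]
        have eA : ∀ j ∈ range (n - ii), rowFun n x y z ii j = x := by
          intro j hj
          rw [mem_range] at hj
          unfold rowFun
          split_ifs <;> omega
        have eB : ∀ j ∈ Ico (n - ii) n, rowFun n x y z ii j =
            if j = ii then 1 else y := by
          intro j hj
          rw [mem_Ico] at hj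
          unfold rowFun
          split_ifs <;> omega
        rw [Finset.prod_congr rfl eA, Finset.prod_const, card_range,
          Finset.prod_congr rfl eB,
          prod_peel 1 (fun _ => y) (by rw [mem_Ico]; omega),
          Finset.prod_const, card_erase_of_mem (by rw [mem_Ico]; omega), Nat.card_Ico]
        have e1 : expA n ii = n - ii := by unfold expA; rw [if_neg hsm]
        have e2 : expC n ii = 0 := by unfold expC; rw [if_neg (by omega)]
        have e3 : expB n ii = ii - 1 := by
          unfold expB; rw [e2]; unfold expA; rw [if_neg hsm]; omega
        rw [e1, e2, e3, pow_zero]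
        have : n - (n - ii) - 1 = ii - 1 := by omega
        rw [this]
        ring

/-- If `x, y, z` are distinct pairwise relatively prime positive integers, then for every
`n ≥ 4` the matrix `M_n(x,y,z)` is product-irregular. -/
theorem stmt_2 (x y z : ℕ) (hx : 0 < x) (hy : 0 < y) (hz : 0 < z)
    (hxy : x ≠ y) (hyz : y ≠ z) (hxz : x ≠ z)
    (cxy : Nat.Coprime x y) (cyz : Nat.Coprime y z) (cxz : Nat.Coprime x z)
    (n : ℕ) (hn : 4 ≤ n) :
    MatPI (Mmat n x y z) := by
  intro i j h
  rw [row_formula n x y z hn hx hy hz i, row_formula n x y z hn hx hy hz j] at h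
  have hs : expA n (i : ℕ) + expB n (i : ℕ) + expC n (i : ℕ) =
      expA n (j : ℕ) + expB n (j : ℕ) + expC n (j : ℕ) := by
    rw [exp_sum n _ hn i.isLt, exp_sum n _ hn j.isLt]
  obtain ⟨hA, _, hC⟩ := triple_inj hx hy hz hxy hyz hxz cxy cyz cxz hs h
  exact Fin.ext (exp_inj n hn i.isLt j.isLt hA hC)
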